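/- The twisted G-action acts by coalgebra automorphisms: for any g, h, k ∈ G and any c ∈ 𝒞, the identity Δ_{ghg⁻¹, gkg⁻¹}(T_{hk}(g)(c)) = (T_h(g) ⊗ T_k(g))(Δ_{h,k}(c)) holds in 𝒞⊗𝒞. -/

import Mathlib

open scoped TensorProduct

noncomputable section

variable {K : Type*} [Field K] {G : Type*} [Group G]
  {A : Type*} [Ring A] [Algebra K A] {ι : Type*} [Fintype ι]

/-- The subspace `𝒞_h = span{c₁c₂ − c₂·h(c₁) | c₁, c₂ ∈ 𝒞}`. -/
def commSub (ρ : G → A ≃ₐ[K] A) (h : G) : Submodule K A :=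
  Submodule.span K {x | ∃ c₁ c₂ : A, x = c₁ * c₂ - c₂ * ρ h c₁}

/-- The map `T_h(g)(c) = c_e⁻¹ c_{g,g⁻¹}⁻¹ g(c) c_{g,h} c_{gh,g⁻¹}`. -/
def Tmap (ρ : G → A ≃ₐ[K] A) (u : G → G → Aˣ) (ue : Aˣ) (g h : G) (x : A) : A :=
  (↑(ue⁻¹) : A) * (↑((u g g⁻¹)⁻¹) : A) * ρ g x * (↑(u g h) : A) * (↑(u (g * h) g⁻¹) : A)

/-- The twisted multiplication `m_{g,h}(c′⊗c″) = Σᵢ ξ′ᵢ c′ g(ξ″ᵢ c″) c_{g,h}`. -/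
def mMul (ρ : G → A ≃ₐ[K] A) (u : G → G → Aˣ) (ξ₁ ξ₂ : ι → A) (g h : G)
    (c' c'' : A) : A :=
  ∑ i, ξ₁ i * c' * ρ g (ξ₂ i * c'') * (↑(u g h) : A)

/-- The twisted comultiplication `Δ_{g,h}(c) = Σᵢ c c_{g,h}⁻¹ g(ξ′ᵢ) ⊗ ξ″ᵢ`. -/
def ΔCom (ρ : G → A ≃ₐ[K] A) (u : G → G → Aˣ) (ξ₁ ξ₂ : ι → A) (g h : G)
    (c : A) : A ⊗[K] A :=
  ∑ i, (c * (↑((u g h)⁻¹) : A) * ρ g (ξ₁ i)) ⊗ₜ[K] ξ₂ i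

/-- The subspace `𝒞_g ⊗ 𝒞` of `𝒞 ⊗ 𝒞`. -/
def leftTensor (ρ : G → A ≃ₐ[K] A) (g : G) : Submodule K (A ⊗[K] A) :=
  Submodule.span K {z | ∃ x ∈ commSub ρ g, ∃ y : A, z = x ⊗ₜ[K] y}

/-- The subspace `𝒞 ⊗ 𝒞_h` of `𝒞 ⊗ 𝒞`. -/
def rightTensor (ρ : G → A ≃ₐ[K] A) (h : G) : Submodule K (A ⊗[K] A) :=
  Submodule.span K {z | ∃ x : A, ∃ y ∈ commSub ρ h, z = x ⊗ₜ[K] y}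

/-- Dual expansion with respect to the other leg of the Frobenius pairing. -/
lemma aux_hxi' (θ : A →ₗ[K] K) (ξ₁ ξ₂ : ι → A)
    (hξ : ∀ a : A, a = ∑ i, θ (a * ξ₂ i) • ξ₁ i)
    (hξsym : (∑ i, ξ₁ i ⊗ₜ[K] ξ₂ i) = ∑ i, ξ₂ i ⊗ₜ[K] ξ₁ i)
    (a : A) : a = ∑ i, θ (a * ξ₁ i) • ξ₂ i := by
  let B : A →ₗ[K] A →ₗ[K] A :=
    (LinearMap.lsmul K A).comp (θ.comp (LinearMap.mulLeft K a))
  have := congrArg (TensorProduct.lift B) hξsym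
  simp only [map_sum, TensorProduct.lift.tmul] at this
  have hB : ∀ x y : A, B x y = θ (a * x) • y := fun x y => rfl
  simp only [hB] at this
  rw [this]; exact hξ a

/-- The Casimir property of the symmetric tensor `ξ`. -/
lemma aux_casL (θ : A →ₗ[K] K) (htr : ∀ a b : A, θ (a * b) = θ (b * a))
    (ξ₁ ξ₂ : ι → A)
    (hξ : ∀ a : A, a = ∑ i, θ (a * ξ₂ i) • ξ₁ i)
    (hξ' : ∀ a : A, a = ∑ i, θ (a * ξ₁ i) • ξ₂ i)
    (a : A) :
    (∑ i, (a * ξ₁ i) ⊗ₜ[K] ξ₂ i) = ∑ i, ξ₁ i ⊗ₜ[K] (ξ₂ i * a) := by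
  calc (∑ i, (a * ξ₁ i) ⊗ₜ[K] ξ₂ i)
      = ∑ i, ∑ j, θ (a * ξ₁ i * ξ₂ j) • (ξ₁ j ⊗ₜ[K] ξ₂ i) := by
        refine Finset.sum_congr rfl fun i _ => ?_
        conv_lhs => rw [hξ (a * ξ₁ i)]
        rw [TensorProduct.sum_tmul]
        exact Finset.sum_congr rfl fun j _ => by rw [TensorProduct.smul_tmul']
    _ = ∑ j, ∑ i, θ (a * ξ₁ i * ξ₂ j) • (ξ₁ j ⊗ₜ[K] ξ₂ i) := Finset.sum_comm
    _ = ∑ i, ξ₁ i ⊗ₜ[K] (ξ₂ i * a) := by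
        refine Finset.sum_congr rfl fun j _ => ?_
        conv_rhs => rw [hξ' (ξ₂ j * a)]
        rw [TensorProduct.tmul_sum]
        refine Finset.sum_congr rfl fun i _ => ?_
        rw [TensorProduct.tmul_smul]
        congr 1
        rw [htr (a * ξ₁ i) (ξ₂ j), ← mul_assoc]

/-- Invariance of the symmetric tensor `ξ` under trace-preserving algebra automorphisms. -/
lemma aux_inv (θ : A →ₗ[K] K) (htr : ∀ a b : A, θ (a * b) = θ (b * a))
    (ξ₁ ξ₂ : ι → A)
    (hξ : ∀ a : A, a = ∑ i, θ (a * ξ₂ i) • ξ₁ i)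
    (hξ' : ∀ a : A, a = ∑ i, θ (a * ξ₁ i) • ξ₂ i)
    (φ : A ≃ₐ[K] A) (hφ : ∀ a : A, θ (φ a) = θ a) :
    (∑ i, ξ₁ i ⊗ₜ[K] ξ₂ i) = ∑ i, φ (ξ₁ i) ⊗ₜ[K] φ (ξ₂ i) := by
  symm
  calc (∑ i, φ (ξ₁ i) ⊗ₜ[K] φ (ξ₂ i))
      = ∑ i, ∑ j, θ (φ.symm (ξ₂ j) * ξ₁ i) • (ξ₁ j ⊗ₜ[K] φ (ξ₂ i)) := by
        refine Finset.sum_congr rfl fun i _ => ?_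
        conv_lhs => rw [hξ (φ (ξ₁ i))]
        rw [TensorProduct.sum_tmul]
        refine Finset.sum_congr rfl fun j _ => ?_
        rw [TensorProduct.smul_tmul']
        congr 2
        conv_lhs => rw [show ξ₂ j = φ (φ.symm (ξ₂ j)) by rw [AlgEquiv.apply_symm_apply]]
        rw [← map_mul, hφ, htr]
    _ = ∑ j, ξ₁ j ⊗ₜ[K] (∑ i, θ (φ.symm (ξ₂ j) * ξ₁ i) • φ (ξ₂ i)) := by
        rw [Finset.sum_comm]
        refine Finset.sum_congr rfl fun j _ => ?_
        rw [TensorProduct.tmul_sum]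
        exact Finset.sum_congr rfl fun i _ => by rw [TensorProduct.tmul_smul]
    _ = ∑ j, ξ₁ j ⊗ₜ[K] ξ₂ j := by
        refine Finset.sum_congr rfl fun j _ => ?_
        congr 1
        have : (∑ i, θ (φ.symm (ξ₂ j) * ξ₁ i) • φ (ξ₂ i))
            = φ (∑ i, θ (φ.symm (ξ₂ j) * ξ₁ i) • ξ₂ i) := by
          rw [map_sum]
          exact Finset.sum_congr rfl fun i _ => by rw [map_smul]
        rw [this, ← hξ' (φ.symm (ξ₂ j)), AlgEquiv.apply_symm_apply]

/-- Transport of sum-of-tensor identities through linear maps on both legs. -/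
lemma aux_map_sum_tmul (F G : A →ₗ[K] A) (x₁ y₁ x₂ y₂ : ι → A)
    (hxy : (∑ i, x₁ i ⊗ₜ[K] y₁ i) = ∑ i, x₂ i ⊗ₜ[K] y₂ i) :
    (∑ i, F (x₁ i) ⊗ₜ[K] G (y₁ i)) = ∑ i, F (x₂ i) ⊗ₜ[K] G (y₂ i) := by
  have := congrArg (TensorProduct.map F G) hxy
  simpa only [map_sum, TensorProduct.map_tmul] using this

/-- The central `2`-cocycle identity. -/
lemma aux_star (ρ : G → A ≃ₐ[K] A) (u : G → G → Aˣ) (ue : Aˣ)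
    (hAd : ∀ (g h : G) (x : A),
      ρ g (ρ h x) = (↑(u g h) : A) * ρ (g * h) x * (↑((u g h)⁻¹) : A))
    (hcoc : ∀ g h k : G,
      (↑(u g h) : A) * (↑(u (g * h) k) : A) = ρ g (↑(u h k) : A) * (↑(u g (h * k)) : A))
    (hue1 : ∀ g : G, (↑(u g 1) : A) = ρ g (↑ue : A))
    (hue2 : ∀ g : G, (↑(u 1 g) : A) = (↑ue : A))
    (g h k : G) :
    ρ g (↑((u h k)⁻¹) : A) * (ρ g (↑(u h g⁻¹) : A) * ((↑(u g (h * g⁻¹)) : A) *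
      ρ (g * h * g⁻¹) ((↑(ue⁻¹) : A) * ((↑((u g g⁻¹)⁻¹) : A) *
        ((↑(u g k) : A) * (↑(u (g * k) g⁻¹) : A)))))) =
    (↑(u g (h * k)) : A) * ((↑(u (g * (h * k)) g⁻¹) : A) *
      (↑((u (g * h * g⁻¹) (g * k * g⁻¹))⁻¹) : A)) := by
  set Φ : G → Aˣ →* Aˣ := fun σ => Units.map (MonoidHomClass.toMonoidHom (ρ σ)) with hΦ
  have hcoe : ∀ (σ : G) (w : Aˣ), (↑(Φ σ w) : A) = ρ σ (↑w : A) := fun σ w => rfl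
  have CU : ∀ a b c' : G, u a b * u (a * b) c' = Φ a (u b c') * u a (b * c') := by
    intro a b c'
    apply Units.ext
    simpa [Units.val_mul, hcoe] using hcoc a b c'
  have AdU : ∀ (a b : G) (v : Aˣ), Φ a (Φ b v) = u a b * Φ (a * b) v * (u a b)⁻¹ := by
    intro a b v
    apply Units.ext
    simpa [Units.val_mul, hcoe] using hAd a b (↑v : A)
  have hE1U : ∀ a : G, u a 1 = Φ a ue := fun a => Units.ext (by simpa [hcoe] using hue1 a)
  have hE2U : ∀ a : G, u 1 a = ue := fun a => Units.ext (hue2 a)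
  have hgg : g * g⁻¹ = (1 : G) := mul_inv_cancel g
  have hgg' : g⁻¹ * g = (1 : G) := inv_mul_cancel g
  have hsg : g * h * g⁻¹ * g = g * h := by group
  have hgt : g * (k * g⁻¹) = g * k * g⁻¹ := (mul_assoc g k g⁻¹).symm
  have f1 : Φ g (u h k) = u g h * u (g * h) k * (u g (h * k))⁻¹ := by
    rw [eq_mul_inv_iff_mul_eq]; exact (CU g h k).symm
  have f2 : Φ g (u h g⁻¹) = u g h * u (g * h) g⁻¹ * (u g (h * g⁻¹))⁻¹ := by
    rw [eq_mul_inv_iff_mul_eq]; exact (CU g h g⁻¹).symm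
  have f3 : Φ (g * h) (u k g⁻¹) = u (g * h) k * u (g * h * k) g⁻¹ * (u (g * h) (k * g⁻¹))⁻¹ := by
    rw [eq_mul_inv_iff_mul_eq]; exact (CU (g * h) k g⁻¹).symm
  have hb'' : (u g g⁻¹ * ue : Aˣ) = Φ g (u g⁻¹ g) * Φ g ue := by
    have c1 := CU g g⁻¹ g
    rw [hgg, hgg', hE2U g, hE1U g] at c1
    exact c1
  have hd1 : Φ (g * h) (u g⁻¹ g) = u (g * h) g⁻¹ * u (g * h * g⁻¹) g * (Φ (g * h) ue)⁻¹ := by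
    rw [eq_mul_inv_iff_mul_eq]
    have c2 := CU (g * h) g⁻¹ g
    rw [hgg', hE1U (g * h)] at c2
    exact c2.symm
  have f5 : Φ (g * h * g⁻¹) (u g (k * g⁻¹))
      = u (g * h * g⁻¹) g * u (g * h) (k * g⁻¹) * (u (g * h * g⁻¹) (g * k * g⁻¹))⁻¹ := by
    rw [eq_mul_inv_iff_mul_eq]
    have c3 := CU (g * h * g⁻¹) g (k * g⁻¹)
    rw [hsg, hgt] at c3
    exact c3.symm
  have e1 : (ue⁻¹ * ((u g g⁻¹)⁻¹ * (u g k * u (g * k) g⁻¹)) : Aˣ)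
      = Φ g ((u g⁻¹ g * ue)⁻¹ * u k g⁻¹) * u g (k * g⁻¹) := by
    rw [CU g k g⁻¹, map_mul, map_inv, map_mul, ← hb'']
    group
  have f4 : Φ (g * h * g⁻¹) (ue⁻¹ * ((u g g⁻¹)⁻¹ * (u g k * u (g * k) g⁻¹)))
      = (u (g * h) g⁻¹)⁻¹ * (Φ (g * h) (u k g⁻¹) *
          (u (g * h) (k * g⁻¹) * (u (g * h * g⁻¹) (g * k * g⁻¹))⁻¹)) := by
    rw [e1, map_mul, AdU (g * h * g⁻¹) g, hsg, f5]
    simp only [map_mul, map_inv]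
    rw [hd1]
    group
  have key : Φ g ((u h k)⁻¹) * (Φ g (u h g⁻¹) * (u g (h * g⁻¹) *
        Φ (g * h * g⁻¹) (ue⁻¹ * ((u g g⁻¹)⁻¹ * (u g k * u (g * k) g⁻¹)))))
      = u g (h * k) * (u (g * (h * k)) g⁻¹ * (u (g * h * g⁻¹) (g * k * g⁻¹))⁻¹) := by
    rw [map_inv, f4, f3, f2, f1, show g * (h * k) = g * h * k from (mul_assoc g h k).symm]
    group
  have := congrArg (Units.val) key
  simpa only [Units.val_mul, hcoe, map_mul] using this

theorem Tmap_coalgebra_automorphism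
    [Fintype G] (ρ : G → A ≃ₐ[K] A) (u : G → G → Aˣ) (ue : Aˣ)
    (hAd : ∀ (g h : G) (x : A),
      ρ g (ρ h x) = (↑(u g h) : A) * ρ (g * h) x * (↑((u g h)⁻¹) : A))
    (hAde : ∀ x : A, ρ (1 : G) x = (↑ue : A) * x * (↑(ue⁻¹) : A))
    (hcoc : ∀ g h k : G,
      (↑(u g h) : A) * (↑(u (g * h) k) : A) = ρ g (↑(u h k) : A) * (↑(u g (h * k)) : A))
    (hue1 : ∀ g : G, (↑(u g 1) : A) = ρ g (↑ue : A))
    (hue2 : ∀ g : G, (↑(u 1 g) : A) = (↑ue : A))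
    [FiniteDimensional K A] (θ : A →ₗ[K] K)
    (htr : ∀ a b : A, θ (a * b) = θ (b * a))
    (hnd : ∀ a : A, (∀ b : A, θ (a * b) = 0) → a = 0)
    (hGinv : ∀ (g : G) (a : A), θ (ρ g a) = θ a)
    (ξ₁ ξ₂ : ι → A)
    (hξ : ∀ a : A, a = ∑ i, θ (a * ξ₂ i) • ξ₁ i)
    (hξsym : (∑ i, ξ₁ i ⊗ₜ[K] ξ₂ i) = ∑ i, ξ₂ i ⊗ₜ[K] ξ₁ i)
    (g h k : G) (c : A) :
    ΔCom ρ u ξ₁ ξ₂ (g * h * g⁻¹) (g * k * g⁻¹) (Tmap ρ u ue g (h * k) c) =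
      ∑ i, Tmap ρ u ue g h (c * (↑((u h k)⁻¹) : A) * ρ h (ξ₁ i)) ⊗ₜ[K]
        Tmap ρ u ue g k (ξ₂ i) := by
  have hξ' := aux_hxi' θ ξ₁ ξ₂ hξ hξsym
  have casL := aux_casL θ htr ξ₁ ξ₂ hξ hξ'
  have hinv := aux_inv θ htr ξ₁ ξ₂ hξ hξ' (ρ g⁻¹) (hGinv g⁻¹)
  -- the two constants
  set MA : A := (↑(ue⁻¹) : A) * (↑((u g g⁻¹)⁻¹) : A) * ρ g c * ρ g (↑((u h k)⁻¹) : A) *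
      ρ g (↑(u h g⁻¹) : A) * (↑(u g (h * g⁻¹)) : A) with hMA
  set rA : A := (↑(ue⁻¹) : A) * ((↑((u g g⁻¹)⁻¹) : A) *
      ((↑(u g k) : A) * (↑(u (g * k) g⁻¹) : A))) with hrA
  -- Claim A
  have claimA : ∀ x : A,
      Tmap ρ u ue g h (c * (↑((u h k)⁻¹) : A) * ρ h (ρ g⁻¹ x)) = MA * ρ (g * h * g⁻¹) x := by
    intro x
    have tail : (↑((u g (h * g⁻¹))⁻¹) : A) * (ρ g (↑((u h g⁻¹)⁻¹) : A) *
        ((↑(u g h) : A) * (↑(u (g * h) g⁻¹) : A))) = 1 := by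
      rw [hcoc g h g⁻¹, ← mul_assoc (ρ g (↑((u h g⁻¹)⁻¹) : A)), ← map_mul]
      simp
    simp only [Tmap, hMA]
    rw [hAd h g⁻¹ x]
    simp only [map_mul]
    rw [hAd g (h * g⁻¹) x, show g * (h * g⁻¹) = g * h * g⁻¹ from (mul_assoc g h g⁻¹).symm]
    simp only [mul_assoc]
    rw [tail, mul_one]
  -- Claim B
  have claimB : ∀ y : A, Tmap ρ u ue g k (ρ g⁻¹ y) = y * rA := by
    intro y
    simp only [Tmap, hrA]
    rw [hAd g g⁻¹ y, show g * g⁻¹ = (1 : G) from mul_inv_cancel g, hAde y]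
    simp [mul_assoc, Units.inv_mul_cancel_left]
  -- Claim C
  have claimC : ∀ x : A,
      MA * ρ (g * h * g⁻¹) (rA * x) =
        Tmap ρ u ue g (h * k) c * (↑((u (g * h * g⁻¹) (g * k * g⁻¹))⁻¹) : A) *
          ρ (g * h * g⁻¹) x := by
    intro x
    rw [map_mul, ← mul_assoc]
    congr 1
    have star := aux_star ρ u ue hAd hcoc hue1 hue2 g h k
    simp only [Tmap, hMA, hrA]
    simp only [mul_assoc]
    rw [show g * (h * g⁻¹) = g * h * g⁻¹ from (mul_assoc g h g⁻¹).symm,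
        show g * (k * g⁻¹) = g * k * g⁻¹ from (mul_assoc g k g⁻¹).symm]
    rw [star]
  -- linear maps
  set T1 : A →ₗ[K] A := (LinearMap.mulRight K ((↑(u g h) : A) * (↑(u (g * h) g⁻¹) : A))).comp
      ((LinearMap.mulLeft K ((↑(ue⁻¹) : A) * (↑((u g g⁻¹)⁻¹) : A))).comp
        ((ρ g).toLinearMap.comp
          ((LinearMap.mulLeft K (c * (↑((u h k)⁻¹) : A))).comp (ρ h).toLinearMap))) with hT1def
  set T2 : A →ₗ[K] A := (LinearMap.mulRight K ((↑(u g k) : A) * (↑(u (g * k) g⁻¹) : A))).comp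
      ((LinearMap.mulLeft K ((↑(ue⁻¹) : A) * (↑((u g g⁻¹)⁻¹) : A))).comp
        (ρ g).toLinearMap) with hT2def
  set T3 : A →ₗ[K] A :=
      (LinearMap.mulLeft K MA).comp (ρ (g * h * g⁻¹)).toLinearMap with hT3def
  have hT1 : ∀ x : A, T1 x = Tmap ρ u ue g h (c * (↑((u h k)⁻¹) : A) * ρ h x) := by
    intro x; simp [hT1def, Tmap, mul_assoc]
  have hT2 : ∀ y : A, T2 y = Tmap ρ u ue g k y := by
    intro y; simp [hT2def, Tmap, mul_assoc]
  have hT3 : ∀ x : A, T3 x = MA * ρ (g * h * g⁻¹) x := by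
    intro x; simp [hT3def]
  calc ΔCom ρ u ξ₁ ξ₂ (g * h * g⁻¹) (g * k * g⁻¹) (Tmap ρ u ue g (h * k) c)
      = ∑ i, (Tmap ρ u ue g (h * k) c * (↑((u (g * h * g⁻¹) (g * k * g⁻¹))⁻¹) : A) *
          ρ (g * h * g⁻¹) (ξ₁ i)) ⊗ₜ[K] ξ₂ i := by simp only [ΔCom]
    _ = ∑ i, T3 (rA * ξ₁ i) ⊗ₜ[K] LinearMap.id (ξ₂ i) := by
        refine Finset.sum_congr rfl fun i _ => ?_
        rw [hT3, claimC (ξ₁ i), LinearMap.id_apply]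
    _ = ∑ i, T3 (ξ₁ i) ⊗ₜ[K] LinearMap.id (ξ₂ i * rA) :=
        aux_map_sum_tmul T3 LinearMap.id (fun i => rA * ξ₁ i) ξ₂ ξ₁ (fun i => ξ₂ i * rA)
          (casL rA)
    _ = ∑ i, T1 (ρ g⁻¹ (ξ₁ i)) ⊗ₜ[K] T2 (ρ g⁻¹ (ξ₂ i)) := by
        refine Finset.sum_congr rfl fun i _ => ?_
        rw [hT3, hT1, hT2, claimA (ξ₁ i), claimB (ξ₂ i), LinearMap.id_apply]
    _ = ∑ i, T1 (ξ₁ i) ⊗ₜ[K] T2 (ξ₂ i) :=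
        (aux_map_sum_tmul T1 T2 ξ₁ ξ₂ (fun i => ρ g⁻¹ (ξ₁ i)) (fun i => ρ g⁻¹ (ξ₂ i)) hinv).symm
    _ = ∑ i, Tmap ρ u ue g h (c * (↑((u h k)⁻¹) : A) * ρ h (ξ₁ i)) ⊗ₜ[K]
          Tmap ρ u ue g k (ξ₂ i) := by
        refine Finset.sum_congr rfl fun i _ => ?_
        rw [hT1, hT2]
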